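/- For θ, θ' in the open simplex (all coordinates positive, summing to 1), the maximum coordinate distance satisfies max_{1≤i≤d} |θ_i − θ'_i| ≤ e^{d_H(θ,θ')} − 1, where d_H is the Hilbert projective metric. -/
import Mathlib


open Finset

/-- The Hilbert projective metric on the strictly positive orthant. -/
noncomputable def hilbertDist {d : ℕ} [NeZero d] (x y : Fin d → ℝ) : ℝ :=
  Real.log ((Finset.univ.sup' Finset.univ_nonempty fun i => x i / y i) /
    (Finset.univ.inf' Finset.univ_nonempty fun i => x i / y i))

/-- The open (relative interior of the) unit simplex. -/
def openSimplex (d : ℕ) : Set (Fin d → ℝ) :=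
  {θ | (∀ i, 0 < θ i) ∧ ∑ i, θ i = 1}

theorem abs_sub_le_exp_hilbertDist_sub_one {d : ℕ} [NeZero d]
    {θ θ' : Fin d → ℝ} (hθ : θ ∈ openSimplex d) (hθ' : θ' ∈ openSimplex d) :
    ∀ i, |θ i - θ' i| ≤ Real.exp (hilbertDist θ θ') - 1 := by
  obtain ⟨hpos, hsum⟩ := hθ
  obtain ⟨hpos', hsum'⟩ := hθ'
  set M := Finset.univ.sup' Finset.univ_nonempty fun i => θ i / θ' i with hM
  set m := Finset.univ.inf' Finset.univ_nonempty fun i => θ i / θ' i with hm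
  have hmpos : 0 < m := by
    rw [hm, Finset.lt_inf'_iff]
    exact fun i _ => div_pos (hpos i) (hpos' i)
  have hle : ∀ i, m ≤ θ i / θ' i := fun i => Finset.inf'_le (fun j => θ j / θ' j) (Finset.mem_univ i)
  have hge : ∀ i, θ i / θ' i ≤ M := fun i => Finset.le_sup' (fun j => θ j / θ' j) (Finset.mem_univ i)
  have hlow : ∀ i, m * θ' i ≤ θ i := fun i => by
    have := hle i
    have h := hpos' i
    rw [le_div_iff₀ h] at this
    linarith
  have hup : ∀ i, θ i ≤ M * θ' i := fun i => by
    have := hge i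
    have h := hpos' i
    rw [div_le_iff₀ h] at this
    linarith
  have i0 : Fin d := ⟨0, Nat.pos_of_ne_zero (NeZero.ne d)⟩
  have hMpos : 0 < M := lt_of_lt_of_le hmpos ((hle i0).trans (hge i0))
  have hM1 : 1 ≤ M := by
    have : (1:ℝ) = ∑ i, θ i := hsum.symm
    have h2 : ∑ i, θ i ≤ ∑ i, M * θ' i := Finset.sum_le_sum fun i _ => hup i
    rw [← Finset.mul_sum, hsum'] at h2
    linarith
  have hm1 : m ≤ 1 := by
    have h2 : ∑ i, m * θ' i ≤ ∑ i, θ i := Finset.sum_le_sum fun i _ => hlow i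
    rw [← Finset.mul_sum, hsum', hsum] at h2
    linarith
  have hexp : Real.exp (hilbertDist θ θ') = M / m := by
    rw [hilbertDist, Real.exp_log (div_pos hMpos hmpos)]
  intro i
  have hθ'le : θ' i ≤ 1 := by
    rw [← hsum']
    exact Finset.single_le_sum (fun j _ => (hpos' j).le) (Finset.mem_univ i)
  have hθle : θ i ≤ 1 := by
    rw [← hsum]
    exact Finset.single_le_sum (fun j _ => (hpos j).le) (Finset.mem_univ i)
  rw [hexp, abs_le]
  constructor
  · have h1 := hlow i
    have h2 := hpos' i
    -- need -(M/m - 1) ≤ θ i - θ' i, i.e. θ' i - θ i ≤ M/m - 1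
    rw [neg_le, neg_sub]
    have key : θ' i - θ i ≤ 1 - m := by nlinarith
    have h3 : (2 - m) * m ≤ M := by nlinarith
    have h4 : 2 - m ≤ M / m := by rw [le_div_iff₀ hmpos]; exact h3
    linarith
  · have h1 := hup i
    have key : θ i - θ' i ≤ M - 1 := by nlinarith [hpos' i]
    have : M - 1 ≤ M / m - 1 := by
      have : M ≤ M / m := by
        rw [le_div_iff₀ hmpos]; nlinarith
      linarith
    linarith
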